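/- Let G = (L, Σ, δ, O) be a POMDP, T ⊆ L, and l ∈ L. If there exists an observation-based strategy that is positive winning for coBüchi(T) from l, then there exists a pure observation-based finite-memory strategy with memory of size at most (|L| + 1) · 2^{|L|} that is positive winning for coBüchi(T) from l. -/

import Mathlib

open scoped ENNReal

/-- A partially-observable Markov decision process (POMDP) with states `L`,
actions `A` and observations `O`: a probabilistic transition function and an
observation function (the observations partition the state space). -/
structure POMDP (L : Type) (A : Type) (O : Type) where
  δ : L → A → PMF L
  obs : L → O

namespace POMDP

variable {L A O : Type}

/-- A (randomized) strategy: given the initial state and the history of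
(action, state) steps played so far, it chooses a distribution on actions. -/
abbrev Strategy (L A : Type) := L → List (A × L) → PMF A

/-- The sequence of states visited along a finite prefix. -/
def statesOf (l : L) (h : List (A × L)) : List L := l :: h.map Prod.snd

/-- Auxiliary probability of a finite prefix, for a strategy `π` given as a
function of the remaining history. -/
noncomputable def prefProbAux (M : POMDP L A O) :
    (List (A × L) → PMF A) → L → List (A × L) → ℝ≥0∞
  | _, _, [] => 1
  | π, l, (a, l') :: h =>
      π [] a * M.δ l a l' * M.prefProbAux (fun h' => π ((a, l') :: h')) l' h

/-- The probability, under strategy `α` from state `l`, that the play starts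
with the finite prefix `h` of (action, state) steps. -/
noncomputable def prefProb (M : POMDP L A O) (α : Strategy L A) (l : L)
    (h : List (A × L)) : ℝ≥0∞ :=
  M.prefProbAux (α l) l h

/-- A prefix is consistent with `α` from `l` if it has positive probability. -/
def Consistent (M : POMDP L A O) (α : Strategy L A) (l : L) (h : List (A × L)) : Prop :=
  0 < M.prefProb α l h

/-- The probability, under strategy `α` from state `l`, that the length-`n`
prefix of the play satisfies the predicate `P`. -/
noncomputable def horizonProb (M : POMDP L A O) [Fintype L] [Fintype A]
    (α : Strategy L A) (l : L) (n : ℕ) (P : List (A × L) → Prop) : ℝ≥0∞ :=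
  ∑ f : Fin n → A × L,
    Set.indicator {g : Fin n → A × L | P (List.ofFn g)}
      (fun g => M.prefProb α l (List.ofFn g)) f

/-- `Pr_l^α(Reach(T))`: probability that the play visits a state of `T`
(as the increasing limit of the finite-horizon reachability probabilities). -/
noncomputable def reachProb (M : POMDP L A O) [Fintype L] [Fintype A]
    (α : Strategy L A) (l : L) (T : Set L) : ℝ≥0∞ :=
  ⨆ n, M.horizonProb α l n (fun h => ∃ s ∈ statesOf l h, s ∈ T)

/-- `Pr_l^α(Safe(T))`: probability that all states of the play lie in `T`
(as the decreasing limit of the finite-horizon safety probabilities). -/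
noncomputable def safeProb (M : POMDP L A O) [Fintype L] [Fintype A]
    (α : Strategy L A) (l : L) (T : Set L) : ℝ≥0∞ :=
  ⨅ n, M.horizonProb α l n (fun h => ∀ s ∈ statesOf l h, s ∈ T)

/-- `Pr_l^α(Until(T₁,T₂))`: probability that the play visits `T₂` at some
position `k` with all positions `≤ k` in `T₁`. -/
noncomputable def untilProb (M : POMDP L A O) [Fintype L] [Fintype A]
    (α : Strategy L A) (l : L) (T₁ T₂ : Set L) : ℝ≥0∞ :=
  ⨆ n, M.horizonProb α l n (fun h => ∃ k, ∃ hk : k < (statesOf l h).length,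
      (statesOf l h).get ⟨k, hk⟩ ∈ T₂ ∧
      ∀ j, ∀ hj : j < (statesOf l h).length, j ≤ k → (statesOf l h).get ⟨j, hj⟩ ∈ T₁)

/-- `Pr_l^α(coBüchi(T))`: probability that from some point on all states of
the play lie in `T`. -/
noncomputable def coBuchiProb (M : POMDP L A O) [Fintype L] [Fintype A]
    (α : Strategy L A) (l : L) (T : Set L) : ℝ≥0∞ :=
  ⨆ k, ⨅ n, M.horizonProb α l n (fun h =>
    ∀ j, ∀ hj : j < (statesOf l h).length, k ≤ j → (statesOf l h).get ⟨j, hj⟩ ∈ T)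

/-- `Pr_l^α(Büchi(T))`: probability that the play visits `T` infinitely often. -/
noncomputable def buchiProb (M : POMDP L A O) [Fintype L] [Fintype A]
    (α : Strategy L A) (l : L) (T : Set L) : ℝ≥0∞ :=
  ⨅ k, ⨆ n, M.horizonProb α l n (fun h =>
    ∃ j, ∃ hj : j < (statesOf l h).length, k ≤ j ∧ (statesOf l h).get ⟨j, hj⟩ ∈ T)

/-- A strategy is observation-based if it plays the same distribution after any
two prefixes with the same sequences of observations and of actions. -/
def ObservationBased (M : POMDP L A O) (α : Strategy L A) : Prop :=
  ∀ l l' (h h' : List (A × L)), M.obs l = M.obs l' →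
    h.map Prod.fst = h'.map Prod.fst →
    h.map (fun p => M.obs p.2) = h'.map (fun p => M.obs p.2) →
    α l h = α l' h'

/-- A strategy is pure if it always plays a Dirac distribution. -/
def PureStrategy (α : Strategy L A) : Prop := ∀ l h, ∃ a, α l h = PMF.pure a

/-- Edge of the underlying graph of the POMDP. -/
def Edge (M : POMDP L A O) (l l' : L) : Prop := ∃ a, 0 < M.δ l a l'

/-- Reachability in the underlying graph of the POMDP. -/
def ReachableFrom (M : POMDP L A O) (l l' : L) : Prop :=
  Relation.ReflTransGen M.Edge l l'

/-- The memory state reached by a memory-update function `u` (together with the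
current state) after running through a prefix. -/
def memRun (M : POMDP L A O) {Mem : Type} (u : Mem → O → A → Mem) :
    Mem → L → List (A × L) → Mem × L
  | m, l, [] => (m, l)
  | m, l, (a, l') :: h => M.memRun u (u m (M.obs l) a) l' h

/-- The (observation-based) strategy induced by a finite-memory machine given by
memory-update function `u`, next-action function `next` and initial memory `m0`. -/
def fmStrategy (M : POMDP L A O) {Mem : Type} (u : Mem → O → A → Mem)
    (next : Mem → O → PMF A) (m0 : Mem) : Strategy L A :=
  fun l h =>
    let p := M.memRun u m0 l h
    next p.1 (M.obs p.2)

/-- The distribution choosing `x` and `y` with probability 1/2 each. -/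
noncomputable def half (x y : L) : PMF L :=
  (PMF.uniformOfFintype Bool).map (fun b => if b then x else y)

end POMDP

namespace POMDP

open scoped Classical
set_option linter.unusedSectionVars false

section Core

variable {L A O : Type} [Fintype L] [Fintype A]

/-- The last state of a prefix started in `t`. -/
def endSt : L → List (A × L) → L
  | t, [] => t
  | _, (_, l') :: h => endSt l' h

@[simp] lemma endSt_nil (t : L) : endSt t ([] : List (A × L)) = t := rfl

@[simp] lemma endSt_cons (t : L) (a : A) (l' : L) (h : List (A × L)) :
    endSt t ((a, l') :: h) = endSt l' h := rfl

lemma endSt_append (t : L) (h₁ h₂ : List (A × L)) :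
    endSt t (h₁ ++ h₂) = endSt (endSt t h₁) h₂ := by
  induction h₁ generalizing t with
  | nil => rfl
  | cons x h ih => cases x; simp [ih]

/-- Sum over all length-`n` histories. -/
noncomputable def HSum (n : ℕ) (F : List (A × L) → ℝ≥0∞) : ℝ≥0∞ :=
  ∑ f : Fin n → A × L, F (List.ofFn f)

lemma HSum_congr_n {n n' : ℕ} (h : n = n') (F : List (A × L) → ℝ≥0∞) :
    HSum n F = HSum n' F := by subst h; rfl

@[simp] lemma HSum_zero (F : List (A × L) → ℝ≥0∞) : HSum 0 F = F [] := by
  simp [HSum]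

lemma ofFn_cons {n : ℕ} (x : A × L) (g : Fin n → A × L) :
    List.ofFn (Fin.cons x g) = x :: List.ofFn g := by
  rw [List.ofFn_succ]
  simp

lemma HSum_succ (n : ℕ) (F : List (A × L) → ℝ≥0∞) :
    HSum (n + 1) F = ∑ x : A × L, HSum n (fun h => F (x :: h)) := by
  rw [HSum, ← (Fin.consEquiv (fun _ : Fin (n+1) => A × L)).sum_comp
      (fun f => F (List.ofFn f))]
  rw [Fintype.sum_prod_type]
  refine Finset.sum_congr rfl fun x _ => Finset.sum_congr rfl fun g _ => ?_
  simp [Fin.consEquiv, ofFn_cons]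

lemma HSum_mono (n : ℕ) {F G : List (A × L) → ℝ≥0∞}
    (h : ∀ hl : List (A × L), hl.length = n → F hl ≤ G hl) :
    HSum n F ≤ HSum n G := by
  refine Finset.sum_le_sum fun f _ => h _ (by simp)

lemma HSum_split (m j : ℕ) (F : List (A × L) → ℝ≥0∞) :
    HSum (m + j) F = HSum m (fun h₁ => HSum j (fun h₂ => F (h₁ ++ h₂))) := by
  induction m generalizing F with
  | zero =>
    rw [HSum_congr_n (Nat.zero_add j), HSum_zero]
    simp
  | succ m ih =>
    rw [HSum_congr_n (Nat.succ_add m j), HSum_succ, HSum_succ]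
    refine Finset.sum_congr rfl fun x _ => ?_
    rw [ih]
    simp

lemma HSum_mul_const (n : ℕ) (c : ℝ≥0∞) (F : List (A × L) → ℝ≥0∞) :
    HSum n (fun h => c * F h) = c * HSum n F := by
  simp [HSum, Finset.mul_sum]

variable (M : POMDP L A O)

@[simp] lemma prefProbAux_nil (π : List (A × L) → PMF A) (t : L) :
    M.prefProbAux π t [] = 1 := rfl

lemma prefProbAux_cons (π : List (A × L) → PMF A) (t : L) (a : A) (l' : L)
    (h : List (A × L)) :
    M.prefProbAux π t ((a, l') :: h) =
      π [] a * M.δ t a l' * M.prefProbAux (fun h' => π ((a, l') :: h')) l' h := rfl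

lemma prefProbAux_append (h₁ h₂ : List (A × L)) (π : List (A × L) → PMF A) (t : L) :
    M.prefProbAux π t (h₁ ++ h₂) =
      M.prefProbAux π t h₁ *
        M.prefProbAux (fun h => π (h₁ ++ h)) (endSt t h₁) h₂ := by
  induction h₁ generalizing π t with
  | nil => simp
  | cons x h ih =>
    obtain ⟨a, l'⟩ := x
    rw [List.cons_append, prefProbAux_cons, prefProbAux_cons, ih]
    simp only [endSt_cons, List.cons_append]
    ring

lemma pmf_sum_univ {X : Type} [Fintype X] (p : PMF X) : ∑ x : X, p x = 1 := by
  rw [← tsum_fintype (L := SummationFilter.unconditional _)]; exact p.tsum_coe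

lemma HSum_prefProbAux (n : ℕ) (π : List (A × L) → PMF A) (t : L) :
    HSum n (fun h => M.prefProbAux π t h) = 1 := by
  induction n generalizing π t with
  | zero => simp
  | succ n ih =>
    rw [HSum_succ]
    have : ∀ x : A × L,
        HSum n (fun h => M.prefProbAux π t (x :: h)) =
          π [] x.1 * M.δ t x.1 x.2 := by
      intro ⟨a, l'⟩
      calc HSum n (fun h => M.prefProbAux π t ((a, l') :: h))
          = HSum n (fun h => π [] a * M.δ t a l' *
              M.prefProbAux (fun h' => π ((a, l') :: h')) l' h) := rfl
        _ = π [] a * M.δ t a l' * 1 := by rw [HSum_mul_const, ih]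
        _ = π [] a * M.δ t a l' := by ring
    rw [Finset.sum_congr rfl fun x _ => this x]
    rw [Fintype.sum_prod_type]
    have : ∀ a : A, ∑ l' : L, π [] a * M.δ t a l' = π [] a := by
      intro a
      rw [← Finset.mul_sum, pmf_sum_univ, mul_one]
    rw [Finset.sum_congr rfl fun a _ => this a, pmf_sum_univ]

lemma horizonProb_eq_HSum (α : Strategy L A) (l : L) (n : ℕ)
    (P : List (A × L) → Prop) :
    M.horizonProb α l n P =
      HSum n (fun h => if P h then M.prefProb α l h else 0) := by
  refine Finset.sum_congr rfl fun f _ => ?_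
  by_cases hP : P (List.ofFn f) <;>
    simp [Set.indicator, hP]

lemma HSum_le_one (n : ℕ) (α : Strategy L A) (l : L)
    (P : List (A × L) → Prop) :
    HSum n (fun h => if P h then M.prefProb α l h else 0) ≤ 1 := by
  calc HSum n (fun h => if P h then M.prefProb α l h else 0)
      ≤ HSum n (fun h => M.prefProbAux (α l) l h) := by
        refine HSum_mono n fun hl _ => ?_
        by_cases hP : P hl <;> simp [hP, prefProb]
    _ = 1 := M.HSum_prefProbAux n (α l) l

end Core

end POMDP
namespace POMDP

section Hard

open scoped Classical
set_option linter.unusedSectionVars false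

variable {L A O : Type} [Fintype L] [Fintype A] (M : POMDP L A O)

/-- Minimum positive transition probability (capped at 1). -/
noncomputable def pmin : ℝ≥0∞ :=
  1 ⊓ Finset.univ.inf (fun x : L × A × L =>
    if M.δ x.1 x.2.1 x.2.2 = 0 then 1 else M.δ x.1 x.2.1 x.2.2)

lemma pmin_pos : 0 < M.pmin := by
  rw [pmin, lt_inf_iff]
  refine ⟨zero_lt_one, ?_⟩
  rw [Finset.lt_inf_iff (by simp : (0:ℝ≥0∞) < ⊤)]
  intro x _
  by_cases h : M.δ x.1 x.2.1 x.2.2 = 0 <;> simp [h, pos_iff_ne_zero]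

lemma pmin_le_one : M.pmin ≤ 1 := inf_le_left

lemma pmin_le {s : L} {a : A} {s' : L} (h : M.δ s a s' ≠ 0) :
    M.pmin ≤ M.δ s a s' := by
  refine inf_le_right.trans ?_
  refine (Finset.inf_le (Finset.mem_univ (s, a, s'))).trans ?_
  simp [h]

/-- All successors of a belief under an action. -/
noncomputable def allSucc (B : Finset L) (a : A) : Finset L :=
  Finset.univ.filter (fun s' => ∃ s ∈ B, M.δ s a s' ≠ 0)

/-- Successors with a given observation. -/
noncomputable def succF (B : Finset L) (a : A) (o : O) : Finset L :=
  (M.allSucc B a).filter (fun s' => M.obs s' = o)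

lemma mem_succF {B : Finset L} {a : A} {o : O} {s' : L} :
    s' ∈ M.succF B a o ↔ (∃ s ∈ B, M.δ s a s' ≠ 0) ∧ M.obs s' = o := by
  simp [succF, allSucc]

/-- Iterated almost-sure-safety filter on belief supports. -/
def Wseq (T : Set L) : ℕ → Set (Finset L)
  | 0 => {B | B.Nonempty ∧ ↑B ⊆ T}
  | i + 1 => {B | (B.Nonempty ∧ ↑B ⊆ T) ∧
      ∃ a, ∀ o, M.succF B a o = ∅ ∨ M.succF B a o ∈ Wseq T i}

lemma Wseq_zero (T : Set L) {B : Finset L} (h : B ∈ M.Wseq T 0) :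
    B.Nonempty ∧ ↑B ⊆ T := h

lemma Wseq_subset_zero (T : Set L) : ∀ i, M.Wseq T i ⊆ M.Wseq T 0
  | 0 => fun _ h => h
  | i + 1 => fun _ h => h.1

lemma Wseq_succ_subset (T : Set L) : ∀ i, M.Wseq T (i + 1) ⊆ M.Wseq T i := by
  intro i
  induction i with
  | zero => exact fun B h => h.1
  | succ i ih =>
    rintro B ⟨h0, a, ha⟩
    exact ⟨h0, a, fun o => (ha o).imp id fun h => ih h⟩

lemma Wseq_antitone (T : Set L) : ∀ {i j}, i ≤ j → M.Wseq T j ⊆ M.Wseq T i := by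
  intro i j hij
  induction hij with
  | refl => exact fun _ h => h
  | step _ ih => exact (M.Wseq_succ_subset T _).trans ih

/-- The limit family: supports from which almost-sure safety is possible. -/
def Wfix (T : Set L) : Set (Finset L) := {B | ∀ i, B ∈ M.Wseq T i}

lemma Wfix_nonempty_subset {T : Set L} {B : Finset L} (h : B ∈ M.Wfix T) :
    B.Nonempty ∧ ↑B ⊆ T := h 0

lemma Wfix_spec {T : Set L} {B : Finset L} (h : B ∈ M.Wfix T) :
    ∃ a, ∀ o, M.succF B a o = ∅ ∨ M.succF B a o ∈ M.Wfix T := by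
  have hg : ∀ i : ℕ, ∃ a, ∀ o,
      M.succF B a o = ∅ ∨ M.succF B a o ∈ M.Wseq T i := fun i => (h (i + 1)).2
  choose g hg using hg
  obtain ⟨a, hinf⟩ := Finite.exists_infinite_fiber g
  refine ⟨a, fun o => ?_⟩
  by_cases hso : M.succF B a o = ∅
  · exact Or.inl hso
  · refine Or.inr fun i => ?_
    have : (g ⁻¹' {a}).Infinite := Set.infinite_coe_iff.mp hinf
    obtain ⟨j, hj, hij⟩ := this.exists_gt i
    have := hg j o
    rw [Set.mem_preimage, Set.mem_singleton_iff] at hj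
    rw [hj] at this
    rcases this with h' | h'
    · exact absurd h' hso
    · exact M.Wseq_antitone T hij.le h'

/-- A canonical safe action on a winning support. -/
noncomputable def actOf (T : Set L) (da : A) (B : Finset L) : A :=
  if h : ∃ a, ∀ o, M.succF B a o = ∅ ∨ M.succF B a o ∈ M.Wfix T then h.choose else da

lemma actOf_spec {T : Set L} (da : A) {B : Finset L} (h : B ∈ M.Wfix T) :
    ∀ o, M.succF B (M.actOf T da B) o = ∅ ∨ M.succF B (M.actOf T da B) o ∈ M.Wfix T := by
  have h' := M.Wfix_spec h
  rw [actOf, dif_pos h']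
  exact h'.choose_spec

/-- The safety predicate on prefixes. -/
def SafeP (T : Set L) (t : L) (h : List (A × L)) : Prop :=
  ∀ x ∈ statesOf t h, x ∈ T

lemma SafeP_cons (T : Set L) (t : L) (a : A) (s' : L) (h : List (A × L)) :
    SafeP T t ((a, s') :: h) ↔ t ∈ T ∧ SafeP T s' h := by
  simp [SafeP, statesOf]

lemma SafeP_head {T : Set L} {t : L} {h : List (A × L)} (hs : SafeP T t h) : t ∈ T :=
  hs t (by simp [statesOf])

/-- Probability of escaping `T` within `n` steps. -/
noncomputable def EscSum (T : Set L) (n : ℕ) (t : L) (π : List (A × L) → PMF A) : ℝ≥0∞ :=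
  HSum n (fun h => if SafeP T t h then 0 else M.prefProbAux π t h)

/-- Probability of staying in `T` for `n` steps. -/
noncomputable def SafeSum (T : Set L) (n : ℕ) (t : L) (π : List (A × L) → PMF A) : ℝ≥0∞ :=
  HSum n (fun h => if SafeP T t h then M.prefProbAux π t h else 0)

lemma safe_add_esc (T : Set L) (n : ℕ) (t : L) (π : List (A × L) → PMF A) :
    M.SafeSum T n t π + M.EscSum T n t π = 1 := by
  rw [SafeSum, EscSum, HSum, HSum, ← Finset.sum_add_distrib]
  have : ∀ f : Fin n → A × L,
      (if SafeP T t (List.ofFn f) then M.prefProbAux π t (List.ofFn f) else 0) +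
        (if SafeP T t (List.ofFn f) then 0 else M.prefProbAux π t (List.ofFn f)) =
        M.prefProbAux π t (List.ofFn f) := by
    intro f
    by_cases hs : SafeP T t (List.ofFn f) <;> simp [hs]
  rw [Finset.sum_congr rfl fun f _ => this f]
  exact M.HSum_prefProbAux n π t

/-- An observation-based family of strategies. -/
def ObsFam (π : L → List (A × L) → PMF A) : Prop :=
  ∀ s s' (h h' : List (A × L)), M.obs s = M.obs s' →
    h.map Prod.fst = h'.map Prod.fst →
    h.map (fun p => M.obs p.2) = h'.map (fun p => M.obs p.2) →
    π s h = π s' h'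

lemma mode_bound {X : Type} [Fintype X] (p : PMF X) :
    ∃ x, ((Fintype.card X : ℝ≥0∞))⁻¹ ≤ p x := by
  haveI hne : Nonempty X := ⟨p.support_nonempty.choose⟩
  obtain ⟨x, -, hmax⟩ := Finset.exists_max_image Finset.univ (fun x => p x)
    Finset.univ_nonempty
  refine ⟨x, ?_⟩
  have h1 : (1 : ℝ≥0∞) ≤ (Fintype.card X : ℝ≥0∞) * p x := by
    calc (1 : ℝ≥0∞) = ∑ y : X, p y := (pmf_sum_univ p).symm
      _ ≤ ∑ _y : X, p x := Finset.sum_le_sum fun y _ => hmax y (Finset.mem_univ y)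
      _ = (Fintype.card X : ℝ≥0∞) * p x := by
        rw [Finset.sum_const, nsmul_eq_mul]
        simp
  calc ((Fintype.card X : ℝ≥0∞))⁻¹ = ((Fintype.card X : ℝ≥0∞))⁻¹ * 1 := by rw [mul_one]
    _ ≤ ((Fintype.card X : ℝ≥0∞))⁻¹ * ((Fintype.card X : ℝ≥0∞) * p x) :=
        mul_le_mul_right h1 _
    _ = (((Fintype.card X : ℝ≥0∞))⁻¹ * (Fintype.card X : ℝ≥0∞)) * p x := by ring
    _ = p x := by
        rw [ENNReal.inv_mul_cancel (by exact_mod_cast Fintype.card_ne_zero)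
          (by simp), one_mul]

/-- One-step unfolding bound for the escape probability. -/
lemma EscSum_step (T : Set L) (i : ℕ) (t : L) (ρ : List (A × L) → PMF A)
    (a : A) (s' : L) :
    ρ [] a * M.δ t a s' * M.EscSum T i s' (fun h => ρ ((a, s') :: h)) ≤
      M.EscSum T (i + 1) t ρ := by
  conv_rhs => rw [EscSum, HSum_succ]
  have hterm : ρ [] a * M.δ t a s' *
      M.EscSum T i s' (fun h => ρ ((a, s') :: h)) ≤
      HSum i (fun h => if SafeP T t ((a, s') :: h) then 0
        else M.prefProbAux ρ t ((a, s') :: h)) := by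
    rw [EscSum, ← HSum_mul_const]
    refine HSum_mono i fun hl _ => ?_
    by_cases hs : SafeP T s' hl
    · simp [hs]
    · have hns : ¬ SafeP T t ((a, s') :: hl) := by
        rw [SafeP_cons]; tauto
      rw [if_neg hs, if_neg hns, prefProbAux_cons]
  refine hterm.trans ?_
  exact Finset.single_le_sum (f := fun x : A × L =>
    HSum i (fun h => if SafeP T t (x :: h) then 0 else M.prefProbAux ρ t (x :: h)))
    (fun _ _ => zero_le) (Finset.mem_univ (a, s'))

/-- Key descent lemma: from a support not in `Wseq i`, some state of the support
escapes `T` within `i` steps with probability at least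
`(pmin / |A|) ^ i`, under any observation-based strategy family. -/
lemma descent (T : Set L) :
    ∀ (i : ℕ) (B : Finset L), B.Nonempty → ↑B ⊆ T →
      (∀ s ∈ B, ∀ s' ∈ B, M.obs s = M.obs s') → B ∉ M.Wseq T i →
      ∀ π : L → List (A × L) → PMF A, M.ObsFam π →
      ∃ t ∈ B, (M.pmin * ((Fintype.card A : ℝ≥0∞))⁻¹) ^ i ≤ M.EscSum T i t (π t) := by
  intro i
  induction i with
  | zero => intro B hne hBT _ hW _ _; exact absurd (⟨hne, hBT⟩ : _ ∧ _) hW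
  | succ i ih =>
    intro B hne hBT hobs hW π hπ
    set c : ℝ≥0∞ := M.pmin * ((Fintype.card A : ℝ≥0∞))⁻¹ with hc
    obtain ⟨t₀, ht₀⟩ := hne
    set ν : PMF A := π t₀ [] with hν
    haveI hA : Nonempty A := ⟨ν.support_nonempty.choose⟩
    have hcard1 : (1 : ℝ≥0∞) ≤ (Fintype.card A : ℝ≥0∞) := by
      exact_mod_cast Nat.one_le_iff_ne_zero.mpr Fintype.card_ne_zero
    have hinv1 : ((Fintype.card A : ℝ≥0∞))⁻¹ ≤ 1 := ENNReal.inv_le_one.mpr hcard1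
    have hc1 : c ≤ 1 := by
      rw [hc]
      calc M.pmin * ((Fintype.card A : ℝ≥0∞))⁻¹ ≤ 1 * 1 :=
            mul_le_mul' M.pmin_le_one hinv1
        _ = 1 := one_mul 1
    have hsame : ∀ s ∈ B, π s [] = ν := fun s hs =>
      hπ s t₀ [] [] (hobs s hs t₀ ht₀) rfl rfl
    obtain ⟨astar, hastar⟩ := mode_bound ν
    have hbad : ∃ o, M.succF B astar o ≠ ∅ ∧ M.succF B astar o ∉ M.Wseq T i := by
      by_contra hcon
      push_neg at hcon
      refine hW ⟨⟨⟨t₀, ht₀⟩, hBT⟩, astar, fun o => ?_⟩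
      by_cases hso : M.succF B astar o = ∅
      · exact Or.inl hso
      · exact Or.inr (hcon o (Finset.nonempty_iff_ne_empty.mpr hso))
    obtain ⟨ostar, hone, honW⟩ := hbad
    by_cases hsubT : ↑(M.succF B astar ostar) ⊆ T
    · -- recursive case
      have hne' : (M.succF B astar ostar).Nonempty := Finset.nonempty_iff_ne_empty.mpr hone
      have hobs' : ∀ s ∈ M.succF B astar ostar, ∀ s' ∈ M.succF B astar ostar,
          M.obs s = M.obs s' := by
        intro s hs s' hs'
        rw [(M.mem_succF.mp hs).2, (M.mem_succF.mp hs').2]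
      set π' : L → List (A × L) → PMF A := fun s h => π t₀ ((astar, s) :: h) with hπ'def
      have hπ' : M.ObsFam π' := by
        intro s s' h h' ho hf hs
        refine hπ t₀ t₀ _ _ rfl ?_ ?_ <;> simp [hf, hs, ho]
      obtain ⟨t', ht'mem, ht'esc⟩ :=
        ih (M.succF B astar ostar) hne' hsubT hobs' honW π' hπ'
      obtain ⟨⟨t, htB, htδ⟩, -⟩ := M.mem_succF.mp ht'mem
      refine ⟨t, htB, ?_⟩
      have heq : (fun h => π t ((astar, t') :: h)) = π' t' := by
        funext h
        exact hπ t t₀ ((astar, t') :: h) ((astar, t') :: h)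
          (hobs t htB t₀ ht₀) rfl rfl
      have hstep := M.EscSum_step T i t (π t) astar t'
      rw [heq] at hstep
      refine le_trans ?_ hstep
      have hν' : π t [] = ν := hsame t htB
      rw [hν', pow_succ]
      calc c ^ i * c = c * c ^ i := by ring
        _ ≤ (ν astar * M.δ t astar t') * M.EscSum T i t' (π' t') := by
            refine mul_le_mul' ?_ ht'esc
            rw [hc, mul_comm M.pmin]
            exact mul_le_mul' hastar (M.pmin_le htδ)
        _ = ν astar * M.δ t astar t' * M.EscSum T i t' (π' t') := by ring
    · -- leak case
      obtain ⟨s'', hs''succ, hs''T⟩ : ∃ s'' ∈ M.succF B astar ostar, s'' ∉ T := by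
        by_contra hcon
        push_neg at hcon
        exact hsubT fun x hx => hcon x hx
      obtain ⟨⟨t, htB, htδ⟩, -⟩ := M.mem_succF.mp hs''succ
      refine ⟨t, htB, ?_⟩
      have hfull : M.EscSum T i s'' (fun h => π t ((astar, s'') :: h)) = 1 := by
        rw [EscSum]
        have : ∀ hl : List (A × L), hl.length = i →
            (if SafeP T s'' hl then 0
              else M.prefProbAux (fun h => π t ((astar, s'') :: h)) s'' hl) =
            M.prefProbAux (fun h => π t ((astar, s'') :: h)) s'' hl := by
          intro hl _
          rw [if_neg fun hs => hs''T (SafeP_head hs)]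
        calc HSum i _ = HSum i (fun hl =>
              M.prefProbAux (fun h => π t ((astar, s'') :: h)) s'' hl) := by
              refine Finset.sum_congr rfl fun f _ => this _ (by simp)
          _ = 1 := M.HSum_prefProbAux i _ s''
      have hstep := M.EscSum_step T i t (π t) astar s''
      rw [hfull, mul_one] at hstep
      refine le_trans ?_ hstep
      have hν' : π t [] = ν := hsame t htB
      rw [hν']
      calc c ^ (i + 1) ≤ c ^ 1 := pow_le_pow_of_le_one (zero_le) hc1 (by omega)
        _ = c := pow_one c
        _ ≤ ν astar * M.δ t astar s'' := by
            rw [hc, mul_comm M.pmin]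
            exact mul_le_mul' hastar (M.pmin_le htδ)

end Hard

end POMDP
namespace POMDP

section Hard2

open scoped Classical
set_option linter.unusedSectionVars false

variable {L A O : Type} [Fintype L] [Fintype A] (M : POMDP L A O)

lemma statesOf_length (l : L) (h : List (A × L)) :
    (statesOf l h).length = h.length + 1 := by simp [statesOf]

lemma statesOf_append (l : L) (h₁ h₂ : List (A × L)) :
    statesOf l (h₁ ++ h₂) = statesOf l h₁ ++ h₂.map Prod.snd := by
  simp [statesOf]

lemma statesOf_cons (l : L) (a : A) (s' : L) (h : List (A × L)) :
    statesOf l ((a, s') :: h) = l :: statesOf s' h := by simp [statesOf]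

lemma endSt_getElem : ∀ (h : List (A × L)) (l : L),
    (statesOf l h)[h.length]'(by simp [statesOf_length]) = endSt l h := by
  intro h
  induction h with
  | nil => intro l; rfl
  | cons x hh ih =>
    obtain ⟨a, s'⟩ := x
    intro l
    have h1 : statesOf l ((a, s') :: hh) = l :: statesOf s' hh := statesOf_cons l a s' hh
    rw [List.getElem_of_eq h1 (by simp [statesOf_length])]
    simpa using ih s'

/-- The coBüchi finite-horizon predicate. -/
def PKP (T : Set L) (k : ℕ) (l : L) (h : List (A × L)) : Prop :=
  ∀ j, ∀ hj : j < (statesOf l h).length, k ≤ j → (statesOf l h).get ⟨j, hj⟩ ∈ T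

lemma coBuchiProb_eq (α : Strategy L A) (l : L) (T : Set L) :
    M.coBuchiProb α l T = ⨆ k, ⨅ n, M.horizonProb α l n (PKP T k l) := rfl

lemma PKP_restrict {T : Set L} {k : ℕ} {l : L} {h₁ h₂ : List (A × L)}
    (h : PKP T k l (h₁ ++ h₂)) : PKP T k l h₁ := by
  intro j hj hkj
  have hj' : j < (statesOf l (h₁ ++ h₂)).length := by
    rw [statesOf_append]
    simp only [List.length_append]
    omega
  have := h j hj' hkj
  simp only [List.get_eq_getElem] at this ⊢
  rwa [List.getElem_of_eq (statesOf_append l h₁ h₂) hj',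
    List.getElem_append_left hj] at this

lemma PKP_end {T : Set L} {k : ℕ} {l : L} {h₁ : List (A × L)}
    (hkm : k ≤ h₁.length) (h1 : PKP T k l h₁) : endSt l h₁ ∈ T := by
  have hlt : h₁.length < (statesOf l h₁).length := by simp [statesOf_length]
  have := h1 h₁.length hlt hkm
  simp only [List.get_eq_getElem] at this
  rwa [endSt_getElem] at this

lemma PKP_append {T : Set L} {k : ℕ} (l : L)
    (h₁ h₂ : List (A × L)) (hkm : k ≤ h₁.length) (h1 : PKP T k l h₁) :
    PKP T k l (h₁ ++ h₂) ↔ SafeP T (endSt l h₁) h₂ := by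
  have hl1 : (statesOf l h₁).length = h₁.length + 1 := statesOf_length l h₁
  constructor
  · intro hPK x hx
    rw [statesOf] at hx
    rcases List.mem_cons.mp hx with hx | hx
    · subst hx
      exact PKP_end hkm (PKP_restrict hPK)
    · obtain ⟨r, hr, rfl⟩ := List.mem_iff_getElem.mp hx
      have hj : h₁.length + 1 + r < (statesOf l (h₁ ++ h₂)).length := by
        rw [statesOf_append, List.length_append, hl1]
        simpa using hr
      have := hPK (h₁.length + 1 + r) hj (by omega)
      simp only [List.get_eq_getElem] at this
      rw [List.getElem_of_eq (statesOf_append l h₁ h₂) hj,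
        List.getElem_append_right (by omega)] at this
      convert this using 2
      omega
  · intro hS j hj hkj
    simp only [List.get_eq_getElem]
    have hj2 : j < (statesOf l h₁).length + (h₂.map Prod.snd).length := by
      rw [← List.length_append, ← statesOf_append]; exact hj
    rcases Nat.lt_or_ge j (h₁.length + 1) with hjm | hjm
    · rw [List.getElem_of_eq (statesOf_append l h₁ h₂) hj,
        List.getElem_append_left (by omega)]
      have := h1 j (by omega) hkj
      simpa using this
    · rw [List.getElem_of_eq (statesOf_append l h₁ h₂) hj,
        List.getElem_append_right (by omega)]
      refine hS _ ?_
      rw [statesOf]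
      refine List.mem_cons.mpr (Or.inr ?_)
      exact List.getElem_mem _

lemma reach_of_pref : ∀ (h : List (A × L)) (π : List (A × L) → PMF A) (t : L),
    M.prefProbAux π t h ≠ 0 → M.ReachableFrom t (endSt t h) := by
  intro h
  induction h with
  | nil => intro π t _; exact Relation.ReflTransGen.refl
  | cons x hh ih =>
    obtain ⟨a, s'⟩ := x
    intro π t hne
    rw [prefProbAux_cons] at hne
    have h1 : M.δ t a s' ≠ 0 := by
      intro h0; apply hne; rw [h0]; ring
    have h2 : M.prefProbAux (fun h' => π ((a, s') :: h')) s' hh ≠ 0 := by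
      intro h0; apply hne; rw [h0]; ring
    exact Relation.ReflTransGen.head ⟨a, pos_iff_ne_zero.mpr h1⟩ (ih _ s' h2)

lemma HSum_congr_F {n : ℕ} {F G : List (A × L) → ℝ≥0∞}
    (h : ∀ hl : List (A × L), hl.length = n → F hl = G hl) :
    HSum n F = HSum n G :=
  Finset.sum_congr rfl fun f _ => h _ (by simp)

lemma key_contraction (T : Set L) (α : Strategy L A) (hobs : M.ObservationBased α)
    (l : L) (k I : ℕ)
    (hI : ∀ t : L, t ∈ T → M.ReachableFrom l t → ({t} : Finset L) ∉ M.Wseq T I)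
    {m : ℕ} (hm : k ≤ m) :
    M.horizonProb α l (m + I) (PKP T k l) ≤
      (1 - (M.pmin * ((Fintype.card A : ℝ≥0∞))⁻¹) ^ I) *
        M.horizonProb α l m (PKP T k l) := by
  set c : ℝ≥0∞ := M.pmin * ((Fintype.card A : ℝ≥0∞))⁻¹ with hc
  set d : ℝ≥0∞ := 1 - c ^ I with hd
  rw [horizonProb_eq_HSum, horizonProb_eq_HSum, HSum_split, ← HSum_mul_const]
  refine HSum_mono m fun h₁ hlen => ?_
  by_cases hPK : PKP T k l h₁
  · by_cases hpp : M.prefProb α l h₁ = 0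
    · have hz : ∀ h₂ : List (A × L),
          (if PKP T k l (h₁ ++ h₂) then M.prefProb α l (h₁ ++ h₂) else 0) = 0 := by
        intro h₂
        have h0 : M.prefProb α l (h₁ ++ h₂) = 0 := by
          rw [prefProb] at hpp ⊢
          rw [prefProbAux_append, hpp, zero_mul]
        simp [h0]
      calc HSum I (fun h₂ =>
              if PKP T k l (h₁ ++ h₂) then M.prefProb α l (h₁ ++ h₂) else 0)
          = HSum I (fun _ => 0) := HSum_congr_F fun hl _ => hz hl
        _ = 0 := by simp [HSum]
        _ ≤ _ := zero_le
    · set t₁ := endSt l h₁ with ht₁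
      set π₁ : List (A × L) → PMF A := fun h => α l (h₁ ++ h) with hπ₁
      have hkl : k ≤ h₁.length := by omega
      have ht₁T : t₁ ∈ T := PKP_end hkl hPK
      have hreach : M.ReachableFrom l t₁ := by
        rw [ht₁]
        exact M.reach_of_pref h₁ (α l) l (by rw [prefProb] at hpp; exact hpp)
      have hsing : ({t₁} : Finset L) ∉ M.Wseq T I := hI t₁ ht₁T hreach
      have hobsfam : M.ObsFam (fun _ h => α l (h₁ ++ h)) := by
        intro s s' hh hh' _ hf ho
        exact hobs l l (h₁ ++ hh) (h₁ ++ hh') rfl (by simp [hf]) (by simp [ho])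
      obtain ⟨t', ht', hesc⟩ := M.descent T I {t₁} (Finset.singleton_nonempty t₁)
        (by simpa using ht₁T)
        (by intro s hs s' hs'
            rw [Finset.mem_singleton] at hs hs'
            rw [hs, hs'])
        hsing (fun _ h => α l (h₁ ++ h)) hobsfam
      rw [Finset.mem_singleton] at ht'
      rw [ht'] at hesc
      have hsafe : M.SafeSum T I t₁ π₁ ≤ d := by
        have hadd := M.safe_add_esc T I t₁ π₁
        have h1 : M.SafeSum T I t₁ π₁ + c ^ I ≤ 1 := by
          rw [← hadd]
          exact add_le_add le_rfl hesc
        rw [hd]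
        have hEsc1 : M.EscSum T I t₁ π₁ ≤ 1 := by
          rw [← hadd]
          exact le_add_self
        exact ENNReal.le_sub_of_add_le_right
          ((hesc.trans hEsc1).trans_lt ENNReal.one_lt_top).ne h1
      have hsum_eq : HSum I (fun h₂ =>
            if PKP T k l (h₁ ++ h₂) then M.prefProb α l (h₁ ++ h₂) else 0)
          = M.prefProb α l h₁ * M.SafeSum T I t₁ π₁ := by
        rw [SafeSum, ← HSum_mul_const]
        refine HSum_congr_F fun hl _ => ?_
        rw [if_congr (PKP_append l h₁ hl hkl hPK) rfl rfl]
        by_cases hs : SafeP T t₁ hl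
        · rw [if_pos hs, if_pos hs, prefProb, prefProb, prefProbAux_append]
        · rw [if_neg hs, if_neg hs, mul_zero]
      rw [hsum_eq, if_pos hPK]
      calc M.prefProb α l h₁ * M.SafeSum T I t₁ π₁
          ≤ M.prefProb α l h₁ * d := mul_le_mul_right hsafe _
        _ = d * M.prefProb α l h₁ := mul_comm _ _
  · have hz : ∀ h₂ : List (A × L),
        (if PKP T k l (h₁ ++ h₂) then M.prefProb α l (h₁ ++ h₂) else 0) = 0 := by
      intro h₂
      exact if_neg fun hP => hPK (PKP_restrict hP)
    calc HSum I (fun h₂ =>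
            if PKP T k l (h₁ ++ h₂) then M.prefProb α l (h₁ ++ h₂) else 0)
        = HSum I (fun _ => 0) := HSum_congr_F fun hl _ => hz hl
      _ = 0 := by simp [HSum]
      _ ≤ _ := zero_le

/-- Hard direction: a positively winning observation-based strategy yields a
reachable state whose singleton belief is almost-surely safe. -/
lemma exists_singleton_Wfix (T : Set L) (l : L)
    (h : ∃ α : Strategy L A, M.ObservationBased α ∧ 0 < M.coBuchiProb α l T) :
    ∃ t, M.ReachableFrom l t ∧ ({t} : Finset L) ∈ M.Wfix T := by
  by_contra hcon
  push_neg at hcon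
  obtain ⟨α, hobs, hpos⟩ := h
  haveI hA : Nonempty A := ⟨(α l []).support_nonempty.choose⟩
  rw [coBuchiProb_eq] at hpos
  obtain ⟨k, hk⟩ := lt_iSup_iff.mp hpos
  have hcon' : ∀ t, M.ReachableFrom l t → ({t} : Finset L) ∉ M.Wfix T := by
    intro t hr hW
    exact hcon t hr hW
  classical
  set iFun : L → ℕ := fun t =>
    if hex : ∃ i, ({t} : Finset L) ∉ M.Wseq T i then Nat.find hex else 0 with hiFun
  set I : ℕ := Finset.univ.sup iFun with hIdef
  have hI : ∀ t : L, t ∈ T → M.ReachableFrom l t → ({t} : Finset L) ∉ M.Wseq T I := by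
    intro t _ hr
    have hnW : ({t} : Finset L) ∉ M.Wfix T := hcon' t hr
    have hex : ∃ i, ({t} : Finset L) ∉ M.Wseq T i := by
      rw [Wfix, Set.mem_setOf_eq] at hnW
      push_neg at hnW
      exact hnW
    have hfind := Nat.find_spec hex
    have hle : Nat.find hex ≤ I := by
      have h1 : iFun t = Nat.find hex := dif_pos hex
      rw [← h1]
      exact Finset.le_sup (Finset.mem_univ t)
    intro hmem
    exact hfind (M.Wseq_antitone T hle hmem)
  set c : ℝ≥0∞ := M.pmin * ((Fintype.card A : ℝ≥0∞))⁻¹ with hc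
  set d : ℝ≥0∞ := 1 - c ^ I with hd
  have hcne : c ≠ 0 := by
    rw [hc]
    exact mul_ne_zero (pos_iff_ne_zero.mp (M.pmin_pos))
      (ENNReal.inv_ne_zero.mpr (ENNReal.natCast_ne_top _))
  have hd1 : d < 1 := by
    rw [hd]
    exact ENNReal.sub_lt_self ENNReal.one_ne_top one_ne_zero (pow_ne_zero I hcne)
  have hX1 : M.horizonProb α l k (PKP T k l) ≤ 1 := by
    rw [horizonProb_eq_HSum]
    exact M.HSum_le_one k α l _
  have hiter : ∀ r : ℕ, M.horizonProb α l (k + r * I) (PKP T k l) ≤ d ^ r := by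
    intro r
    induction r with
    | zero => simpa using hX1
    | succ r ihr =>
      have harith : k + (r + 1) * I = (k + r * I) + I := by ring
      rw [harith]
      calc M.horizonProb α l ((k + r * I) + I) (PKP T k l)
          ≤ d * M.horizonProb α l (k + r * I) (PKP T k l) :=
            M.key_contraction T α hobs l k I hI (Nat.le_add_right k _)
        _ ≤ d * d ^ r := mul_le_mul_right ihr d
        _ = d ^ (r + 1) := by ring
  have hεle : ∀ r : ℕ, (⨅ n, M.horizonProb α l n (PKP T k l)) ≤ d ^ r :=
    fun r => (iInf_le _ (k + r * I)).trans (hiter r)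
  obtain ⟨r, hr⟩ :=
    ((ENNReal.tendsto_pow_atTop_nhds_zero_of_lt_one hd1).eventually_lt_const hk).exists
  exact absurd (hεle r) (not_le.mpr hr)

end Hard2

end POMDP
namespace POMDP

section Easy

open scoped Classical
set_option linter.unusedSectionVars false

variable {L A O : Type} [Fintype L] [Fintype A] (M : POMDP L A O)

/-- Extract a finite path (as functions over `ℕ`) from graph reachability. -/
lemma exists_nat_path (da : A) {l t : L} (h : M.ReachableFrom l t) :
    ∃ (q : ℕ) (s : ℕ → L) (acts : ℕ → A), s 0 = l ∧ s q = t ∧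
      ∀ i < q, M.δ (s i) (acts i) (s (i + 1)) ≠ 0 := by
  induction h with
  | refl => exact ⟨0, fun _ => l, fun _ => da, rfl, rfl, by omega⟩
  | tail hab hbc ih =>
    rename_i b c
    obtain ⟨q, s, acts, h0, hq, hstep⟩ := ih
    obtain ⟨a, ha⟩ := hbc
    refine ⟨q + 1, fun i => if i ≤ q then s i else c,
      fun i => if i = q then a else acts i, ?_, ?_, ?_⟩
    · simpa using h0
    · simp
    · intro i hi
      simp only
      rcases Nat.lt_or_ge i q with hiq | hiq
      · have e1 : (if i ≤ q then s i else c) = s i := if_pos (by omega)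
        have e2 : (if i + 1 ≤ q then s (i + 1) else c) = s (i + 1) := if_pos (by omega)
        have e3 : (if i = q then a else acts i) = acts i := if_neg (by omega)
        rw [e1, e2, e3]
        exact hstep i hiq
      · have hieq : i = q := by omega
        subst hieq
        have e1 : (if i ≤ i then s i else c) = s i := if_pos le_rfl
        have e2 : (if i + 1 ≤ i then s (i + 1) else c) = c := if_neg (by omega)
        have e3 : (if i = i then a else acts i) = a := if_pos rfl
        rw [e1, e2, e3, hq]
        exact pos_iff_ne_zero.mp ha

/-- Shorten a path to length at most `|L|`. -/
lemma shorten_path {l t : L} :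
    ∀ (q : ℕ) (s : ℕ → L) (acts : ℕ → A), s 0 = l → s q = t →
      (∀ i < q, M.δ (s i) (acts i) (s (i + 1)) ≠ 0) →
      ∃ q' ≤ Fintype.card L, ∃ (s' : ℕ → L) (acts' : ℕ → A), s' 0 = l ∧ s' q' = t ∧
        ∀ i < q', M.δ (s' i) (acts' i) (s' (i + 1)) ≠ 0 := by
  intro q
  induction q using Nat.strong_induction_on with
  | _ q ih =>
    intro s acts h0 hq hstep
    by_cases hle : q ≤ Fintype.card L
    · exact ⟨q, hle, s, acts, h0, hq, hstep⟩
    · push_neg at hle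
      have hcard : Fintype.card L < Fintype.card (Fin (q + 1)) := by
        simpa using by omega
      obtain ⟨i, j, hij, hsij⟩ :=
        Fintype.exists_ne_map_eq_of_card_lt (fun i : Fin (q + 1) => s i) hcard
      obtain ⟨iv, jv, hivjv, hjvq, hs_eq⟩ :
          ∃ iv jv, iv < jv ∧ jv ≤ q ∧ s iv = s jv := by
        rcases lt_trichotomy i.val j.val with hlt | heq | hgt
        · exact ⟨i.val, j.val, hlt, by omega, hsij⟩
        · exact absurd (Fin.ext heq) hij
        · exact ⟨j.val, i.val, hgt, by omega, hsij.symm⟩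
      set d := jv - iv with hd
      have hd0 : 0 < d := by omega
      refine ih (q - d) (by omega) (fun k => if k ≤ iv then s k else s (k + d))
        (fun k => if k < iv then acts k else acts (k + d)) ?_ ?_ ?_
      · simpa using h0
      · try simp only
        by_cases hqd : q - d ≤ iv
        · have h1 : q - d = iv := by omega
          have h2 : jv = q := by omega
          rw [if_pos hqd, h1, hs_eq, h2, hq]
        · push_neg at hqd
          rw [if_neg (by omega)]
          rw [show q - d + d = q by omega, hq]
      · intro k hk
        try simp only
        rcases Nat.lt_or_ge k iv with hki | hki
        · have e1 : (if k ≤ iv then s k else s (k + d)) = s k := if_pos (by omega)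
          have e2 : (if k + 1 ≤ iv then s (k + 1) else s (k + 1 + d)) = s (k + 1) :=
            if_pos (by omega)
          have e3 : (if k < iv then acts k else acts (k + d)) = acts k := if_pos hki
          rw [e1, e2, e3]
          exact hstep k (by omega)
        · rcases Nat.eq_or_lt_of_le hki with hkeq | hki'
          · rw [← hkeq]
            have e1 : (if iv ≤ iv then s iv else s (iv + d)) = s jv := by
              rw [if_pos le_rfl, hs_eq]
            have e2 : (if iv + 1 ≤ iv then s (iv + 1) else s (iv + 1 + d)) = s (jv + 1) := by
              rw [if_neg (by omega), show iv + 1 + d = jv + 1 by omega]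
            have e3 : (if iv < iv then acts iv else acts (iv + d)) = acts jv := by
              rw [if_neg (by omega), show iv + d = jv by omega]
            rw [e1, e2, e3]
            exact hstep jv (by omega)
          · have e1 : (if k ≤ iv then s k else s (k + d)) = s (k + d) := if_neg (by omega)
            have e2 : (if k + 1 ≤ iv then s (k + 1) else s (k + 1 + d)) = s (k + d + 1) := by
              rw [if_neg (by omega), show k + 1 + d = k + d + 1 by omega]
            have e3 : (if k < iv then acts k else acts (k + d)) = acts (k + d) :=
              if_neg (by omega)
            rw [e1, e2, e3]
            exact hstep (k + d) (by omega)

lemma memRun_append {Mem : Type} (u : Mem → O → A → Mem) :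
    ∀ (h₁ h₂ : List (A × L)) (m : Mem) (t : L),
      M.memRun u m t (h₁ ++ h₂) =
        M.memRun u (M.memRun u m t h₁).1 (M.memRun u m t h₁).2 h₂ := by
  intro h₁
  induction h₁ with
  | nil => intro h₂ m t; rfl
  | cons x hh ih =>
    obtain ⟨a, l'⟩ := x
    intro h₂ m t
    rw [List.cons_append]
    show M.memRun u (u m (M.obs t) a) l' (hh ++ h₂) = _
    rw [ih]
    rfl

lemma fmStrategy_cons {Mem : Type} (u : Mem → O → A → Mem) (nx : Mem → O → PMF A)
    (m : Mem) (t : L) (a : A) (l' : L) (h : List (A × L)) :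
    M.fmStrategy u nx m t ((a, l') :: h) =
      M.fmStrategy u nx (u m (M.obs t) a) l' h := rfl

lemma fmStrategy_pure {Mem : Type} (u : Mem → O → A → Mem) (next : Mem → O → A)
    (m0 : Mem) :
    PureStrategy (M.fmStrategy u (fun m o => PMF.pure (next m o)) m0) :=
  fun _ _ => ⟨_, rfl⟩

lemma fmStrategy_obs {Mem : Type} (u : Mem → O → A → Mem) (nx : Mem → O → PMF A)
    (m0 : Mem) : M.ObservationBased (M.fmStrategy u nx m0) := by
  have aux : ∀ (h h' : List (A × L)) (m : Mem) (t t' : L), M.obs t = M.obs t' →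
      h.map Prod.fst = h'.map Prod.fst →
      h.map (fun p => M.obs p.2) = h'.map (fun p => M.obs p.2) →
      (M.memRun u m t h).1 = (M.memRun u m t' h').1 ∧
        M.obs (M.memRun u m t h).2 = M.obs (M.memRun u m t' h').2 := by
    intro h
    induction h with
    | nil =>
      intro h' m t t' ho hf _
      have : h' = [] := by simpa using hf.symm
      subst this
      exact ⟨rfl, ho⟩
    | cons x hh ih =>
      intro h' m t t' ho hf hs
      cases h' with
      | nil => simp at hf
      | cons y hh' =>
        obtain ⟨a, s1⟩ := x
        obtain ⟨b, s2⟩ := y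
        simp only [List.map_cons, List.cons.injEq] at hf hs
        obtain ⟨hab, hftl⟩ := hf
        obtain ⟨hos, hstl⟩ := hs
        subst hab
        have e1 : M.memRun u m t ((a, s1) :: hh) = M.memRun u (u m (M.obs t) a) s1 hh := rfl
        have e2 : M.memRun u m t' ((a, s2) :: hh') =
          M.memRun u (u m (M.obs t') a) s2 hh' := rfl
        rw [e1, e2, ho]
        exact ih hh' (u m (M.obs t') a) s1 s2 hos hftl hstl
  intro l l' h h' ho hf hs
  obtain ⟨h1, h2⟩ := aux h h' m0 l l' ho hf hs
  have e : ∀ (t : L) (hh : List (A × L)), M.fmStrategy u nx m0 t hh =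
      nx (M.memRun u m0 t hh).1 (M.obs (M.memRun u m0 t hh).2) := fun _ _ => rfl
  rw [e, e, h1, h2]

variable (T : Set L)

/-- Memory update of the constructed strategy: count up to `q`, then track the
pre-observation belief support. -/
noncomputable def easyU (q : ℕ) (hq : q ≤ Fintype.card L) :
    (Fin (Fintype.card L + 1) × Finset L) → O → A →
      (Fin (Fintype.card L + 1) × Finset L) :=
  fun m o a =>
    if hlt : m.1.val < q then (⟨m.1.val + 1, by omega⟩, m.2)
    else (m.1, M.allSucc (m.2.filter (fun x => M.obs x = o)) a)

/-- Next-action function of the constructed strategy. -/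
noncomputable def easyNext (da : A) (q : ℕ) (acts : ℕ → A) :
    (Fin (Fintype.card L + 1) × Finset L) → O → A :=
  fun m o =>
    if m.1.val < q then acts m.1.val
    else M.actOf T da (m.2.filter (fun x => M.obs x = o))

variable (da : A) (q : ℕ) (hq : q ≤ Fintype.card L) (s : ℕ → L) (acts : ℕ → A)
  (B₀ : Finset L)

/-- The remaining path as a history. -/
noncomputable def restList (j r : ℕ) : List (A × L) :=
  List.ofFn (fun i : Fin r => (acts (j + ↑i), s (j + ↑i + 1)))

lemma restList_zero (j : ℕ) : restList s acts j 0 = [] := rfl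

lemma restList_succ (j r : ℕ) :
    restList s acts j (r + 1) = (acts j, s (j + 1)) :: restList s acts (j + 1) r := by
  rw [restList, List.ofFn_succ, restList]
  refine congrArg₂ _ (by simp) ?_
  refine congrArg List.ofFn (funext fun i => ?_)
  have h1 : j + (↑i + 1) = j + 1 + ↑i := by omega
  simp [Fin.val_succ, h1]

lemma restList_length (j r : ℕ) : (restList s acts j r).length = r := by
  simp [restList]

lemma endSt_restList : ∀ (r j : ℕ), endSt (s j) (restList s acts j r) = s (j + r) := by
  intro r
  induction r with
  | zero => intro j; simp [restList_zero]
  | succ r ih =>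
    intro j
    rw [restList_succ, endSt_cons, ih (j + 1), show j + 1 + r = j + (r + 1) by omega]

/-- The constructed finite-memory strategy, started at an arbitrary memory. -/
noncomputable def eσ (m : Fin (Fintype.card L + 1) × Finset L) : Strategy L A :=
  M.fmStrategy (easyU M q hq) (fun m' o => PMF.pure (easyNext M T da q acts m' o)) m

lemma easy_memRun (hstep : ∀ i < q, M.δ (s i) (acts i) (s (i + 1)) ≠ 0) :
    ∀ (r j : ℕ) (hjr : j + r = q),
      M.memRun (easyU M q hq) (⟨j, by omega⟩, B₀) (s j) (restList s acts j r) =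
        ((⟨q, by omega⟩, B₀), s q) := by
  intro r
  induction r with
  | zero =>
    intro j hjr
    obtain rfl : j = q := by omega
    rfl
  | succ r ih =>
    intro j hjr
    rw [restList_succ]
    show M.memRun (easyU M q hq)
      (easyU M q hq (⟨j, by omega⟩, B₀) (M.obs (s j)) (acts j)) (s (j + 1)) _ = _
    have hu : easyU M q hq (⟨j, by omega⟩, B₀) (M.obs (s j)) (acts j) =
        (⟨j + 1, by omega⟩, B₀) := by
      rw [easyU]
      rw [dif_pos (by simpa using by omega : ((⟨j, by omega⟩ : Fin (Fintype.card L + 1)) : Fin _).val < q)]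
    rw [hu]
    exact ih (j + 1) (by omega)

lemma easy_pref_ne (hstep : ∀ i < q, M.δ (s i) (acts i) (s (i + 1)) ≠ 0) :
    ∀ (r j : ℕ) (hjr : j + r = q),
      M.prefProbAux (eσ M T da q hq acts (⟨j, by omega⟩, B₀) (s j)) (s j)
        (restList s acts j r) ≠ 0 := by
  intro r
  induction r with
  | zero => intro j hjr; simp [restList_zero]
  | succ r ih =>
    intro j hjr
    rw [restList_succ, prefProbAux_cons]
    have hf1 : eσ M T da q hq acts (⟨j, by omega⟩, B₀) (s j) [] (acts j) = 1 := by
      show (PMF.pure (easyNext M T da q acts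
        ((⟨j, by omega⟩, B₀) : Fin (Fintype.card L + 1) × Finset L)
        (M.obs (s j)))) (acts j) = 1
      rw [easyNext]
      simp only
      rw [if_pos (by omega : j < q)]
      exact PMF.pure_apply_self _
    have hf3 : (fun h' => eσ M T da q hq acts (⟨j, by omega⟩, B₀) (s j)
          ((acts j, s (j + 1)) :: h')) =
        eσ M T da q hq acts (⟨j + 1, by omega⟩, B₀) (s (j + 1)) := by
      funext h'
      rw [eσ, fmStrategy_cons]
      congr 1
      rw [easyU]
      rw [dif_pos (by omega : j < q)]
    rw [hf1, hf3]
    exact mul_ne_zero (mul_ne_zero one_ne_zero (hstep j (by omega)))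
      (ih (j + 1) (by omega))

lemma easy_safe :
    ∀ (h₂ : List (A × L)) (Bpre : Finset L) (t : L), t ∈ Bpre →
      (Bpre.filter (fun x => M.obs x = M.obs t)) ∈ M.Wfix T →
      M.prefProbAux (eσ M T da q hq acts (⟨q, by omega⟩, Bpre) t) t h₂ ≠ 0 →
      ∀ x ∈ statesOf t h₂, x ∈ T := by
  intro h₂
  induction h₂ with
  | nil =>
    intro Bpre t htB hW _ x hx
    rw [statesOf] at hx
    simp at hx
    subst hx
    exact (M.Wfix_nonempty_subset hW).2
      (Finset.mem_coe.mpr (Finset.mem_filter.mpr ⟨htB, rfl⟩))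
  | cons y h₃ ih =>
    obtain ⟨a, s'⟩ := y
    intro Bpre t htB hW hpp x hx
    set Bpost := Bpre.filter (fun x => M.obs x = M.obs t) with hBpost
    rw [prefProbAux_cons] at hpp
    have h1 : eσ M T da q hq acts (⟨q, by omega⟩, Bpre) t [] a ≠ 0 := by
      intro h0; apply hpp; rw [h0]; ring
    have h2 : M.δ t a s' ≠ 0 := by
      intro h0; apply hpp; rw [h0]; ring
    have h3 : M.prefProbAux (fun h' => eσ M T da q hq acts (⟨q, by omega⟩, Bpre) t
        ((a, s') :: h')) s' h₃ ≠ 0 := by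
      intro h0; apply hpp; rw [h0]; ring
    have hval : eσ M T da q hq acts (⟨q, by omega⟩, Bpre) t [] =
        PMF.pure (M.actOf T da Bpost) := by
      show PMF.pure (easyNext M T da q acts
        ((⟨q, by omega⟩, Bpre) : Fin (Fintype.card L + 1) × Finset L) (M.obs t)) = _
      rw [easyNext]
      simp only
      rw [if_neg (by omega : ¬ q < q)]
    have ha : a = M.actOf T da Bpost := by
      rw [hval, PMF.pure_apply] at h1
      by_contra hne
      simp [hne] at h1
    subst ha
    have htpost : t ∈ Bpost := Finset.mem_filter.mpr ⟨htB, rfl⟩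
    have hs'mem : s' ∈ M.succF Bpost (M.actOf T da Bpost) (M.obs s') :=
      M.mem_succF.mpr ⟨⟨t, htpost, h2⟩, rfl⟩
    have hWs : M.succF Bpost (M.actOf T da Bpost) (M.obs s') ∈ M.Wfix T := by
      rcases M.actOf_spec da hW (M.obs s') with hempty | hmem
      · rw [hempty] at hs'mem
        exact absurd hs'mem (Finset.notMem_empty s')
      · exact hmem
    have hrec : (fun h' => eσ M T da q hq acts (⟨q, by omega⟩, Bpre) t
          ((M.actOf T da Bpost, s') :: h')) =
        eσ M T da q hq acts (⟨q, by omega⟩, M.allSucc Bpost (M.actOf T da Bpost)) s' := by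
      funext h'
      rw [eσ, fmStrategy_cons]
      congr 1
      rw [easyU]
      simp only
      rw [dif_neg (by omega : ¬ q < q)]
    rw [hrec] at h3
    have hs'succ : s' ∈ M.allSucc Bpost (M.actOf T da Bpost) := by
      rw [allSucc, Finset.mem_filter]
      exact ⟨Finset.mem_univ s', ⟨t, htpost, h2⟩⟩
    have hpost' : (M.allSucc Bpost (M.actOf T da Bpost)).filter
        (fun x => M.obs x = M.obs s') = M.succF Bpost (M.actOf T da Bpost) (M.obs s') := rfl
    rw [statesOf_cons] at hx
    rcases List.mem_cons.mp hx with rfl | hx2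
    · exact (M.Wfix_nonempty_subset hW).2 (Finset.mem_coe.mpr htpost)
    · refine ih _ _ hs'succ ?_ h3 x hx2
      rw [hpost']
      exact hWs

end Easy

end POMDP
namespace POMDP

section Easy2

open scoped Classical
set_option linter.unusedSectionVars false

variable {L A O : Type} [Fintype L] [Fintype A] (M : POMDP L A O) (T : Set L)
  (da : A) (q : ℕ) (hq : q ≤ Fintype.card L) (s : ℕ → L) (acts : ℕ → A)

lemma easy_cobuchi_pos (hstep : ∀ i < q, M.δ (s i) (acts i) (s (i + 1)) ≠ 0)
    (hWB : ({s q} : Finset L) ∈ M.Wfix T) :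
    0 < M.coBuchiProb
      (eσ M T da q hq acts (⟨0, by omega⟩, ({s q} : Finset L))) (s 0) T := by
  set B₀ : Finset L := {s q} with hB₀
  set σ : Strategy L A := eσ M T da q hq acts (⟨0, by omega⟩, B₀) with hσ
  set hstar : List (A × L) := restList s acts 0 q with hhstar
  have hlen : hstar.length = q := restList_length s acts 0 q
  have hsqT : s q ∈ T := (M.Wfix_nonempty_subset hWB).2
    (by rw [hB₀]; simp)
  set ρ₀ : ℝ≥0∞ := M.prefProb σ (s 0) hstar with hρ
  have hρne : ρ₀ ≠ 0 := by
    rw [hρ, prefProb]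
    exact easy_pref_ne M T da q hq s acts B₀ hstep q 0 (by omega)
  have hend : endSt (s 0) hstar = s q := by
    rw [hhstar, endSt_restList]
    norm_num
  have hπshift : (fun hh => σ (s 0) (hstar ++ hh)) =
      eσ M T da q hq acts (⟨q, by omega⟩, B₀) (s q) := by
    funext hh
    have e2 := M.memRun_append (easyU M q hq) hstar hh (⟨0, by omega⟩, B₀) (s 0)
    rw [easy_memRun M q hq s acts B₀ hstep q 0 (by omega)] at e2
    show PMF.pure (easyNext M T da q acts
        (M.memRun (easyU M q hq) (⟨0, by omega⟩, B₀) (s 0) (hstar ++ hh)).1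
        (M.obs (M.memRun (easyU M q hq) (⟨0, by omega⟩, B₀) (s 0) (hstar ++ hh)).2)) =
      PMF.pure (easyNext M T da q acts
        (M.memRun (easyU M q hq) (⟨q, by omega⟩, B₀) (s q) hh).1
        (M.obs (M.memRun (easyU M q hq) (⟨q, by omega⟩, B₀) (s q) hh).2))
    rw [e2]
  have hPKstar : PKP T q (s 0) hstar := by
    intro j hj hqj
    have hjlen : j < q + 1 := by
      rw [statesOf_length, hlen] at hj; omega
    have hj' : j = hstar.length := by omega
    subst hj'
    simp only [List.get_eq_getElem]
    rw [endSt_getElem, hend]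
    exact hsqT
  have hρ1 : ρ₀ ≤ 1 := by
    rw [hρ, ← M.HSum_prefProbAux q (σ (s 0)) (s 0), HSum]
    have hterm0 : M.prefProb σ (s 0) hstar =
        (fun f : Fin q → A × L => M.prefProbAux (σ (s 0)) (s 0) (List.ofFn f))
          (fun i : Fin q => (acts (0 + ↑i), s (0 + ↑i + 1))) := rfl
    exact le_trans (le_of_eq hterm0)
      (Finset.single_le_sum (f := fun f : Fin q → A × L =>
          M.prefProbAux (σ (s 0)) (s 0) (List.ofFn f))
        (fun f _ => zero_le) (Finset.mem_univ _))
  have hbound : ∀ n, ρ₀ ≤ M.horizonProb σ (s 0) n (PKP T q (s 0)) := by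
    intro n
    rcases Nat.lt_or_ge n q with hnq | hnq
    · rw [horizonProb_eq_HSum]
      have hall : ∀ hl : List (A × L), hl.length = n →
          (if PKP T q (s 0) hl then M.prefProb σ (s 0) hl else 0) =
            M.prefProbAux (σ (s 0)) (s 0) hl := by
        intro hl hlable
        rw [if_pos]
        · rfl
        · intro j hj hqj
          rw [statesOf_length, hlable] at hj
          omega
      rw [HSum_congr_F hall, M.HSum_prefProbAux]
      exact hρ1
    · obtain ⟨j', rfl⟩ := Nat.exists_eq_add_of_le hnq
      rw [horizonProb_eq_HSum, HSum_split]
      set gstar : Fin q → A × L := fun i => (acts (0 + ↑i), s (0 + ↑i + 1)) with hgstar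
      have hofn : List.ofFn gstar = hstar := rfl
      have hterm : HSum j' (fun h₂ =>
          if PKP T q (s 0) (List.ofFn gstar ++ h₂)
          then M.prefProb σ (s 0) (List.ofFn gstar ++ h₂) else 0) = ρ₀ := by
        rw [hofn]
        have hptwise : ∀ h₂ : List (A × L),
            (if PKP T q (s 0) (hstar ++ h₂)
              then M.prefProb σ (s 0) (hstar ++ h₂) else 0) =
              ρ₀ * M.prefProbAux (fun hh => σ (s 0) (hstar ++ hh)) (s q) h₂ := by
          intro h₂
          have happ : M.prefProb σ (s 0) (hstar ++ h₂) =
              ρ₀ * M.prefProbAux (fun hh => σ (s 0) (hstar ++ hh)) (s q) h₂ := by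
            rw [hρ, prefProb, prefProb, prefProbAux_append, hend]
          by_cases hz : M.prefProbAux (fun hh => σ (s 0) (hstar ++ hh)) (s q) h₂ = 0
          · rw [hz, mul_zero]
            by_cases hP : PKP T q (s 0) (hstar ++ h₂)
            · rw [if_pos hP, happ, hz, mul_zero]
            · rw [if_neg hP]
          · have hz' : M.prefProbAux
                (eσ M T da q hq acts (⟨q, by omega⟩, B₀) (s q)) (s q) h₂ ≠ 0 := by
              rw [← hπshift]; exact hz
            have hfilt : (B₀.filter (fun x => M.obs x = M.obs (s q))) ∈ M.Wfix T := by
              have : (B₀.filter (fun x => M.obs x = M.obs (s q))) = B₀ := by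
                rw [hB₀, Finset.filter_singleton, if_pos rfl]
              rw [this]; exact hWB
            have hsafe : SafeP T (s q) h₂ := fun x hx =>
              easy_safe M T da q hq acts h₂ B₀ (s q)
                (by rw [hB₀]; exact Finset.mem_singleton_self _) hfilt hz' x hx
            have hP : PKP T q (s 0) (hstar ++ h₂) :=
              (PKP_append (s 0) hstar h₂ hlen.ge hPKstar).mpr
                (by rw [hend]; exact hsafe)
            rw [if_pos hP, happ]
        rw [HSum_congr_F (fun hl _ => hptwise hl), HSum_mul_const,
          M.HSum_prefProbAux, mul_one]
      calc ρ₀ = _ := hterm.symm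
        _ ≤ HSum q (fun h₁ => HSum j' (fun h₂ =>
              if PKP T q (s 0) (h₁ ++ h₂)
              then M.prefProb σ (s 0) (h₁ ++ h₂) else 0)) := by
            have hrw : HSum q (fun h₁ => HSum j' (fun h₂ =>
                if PKP T q (s 0) (h₁ ++ h₂)
                then M.prefProb σ (s 0) (h₁ ++ h₂) else 0)) =
              ∑ g : Fin q → A × L, HSum j' (fun h₂ =>
                if PKP T q (s 0) (List.ofFn g ++ h₂)
                then M.prefProb σ (s 0) (List.ofFn g ++ h₂) else 0) := rfl
            rw [hrw]
            exact Finset.single_le_sum (f := fun g : Fin q → A × L => HSum j'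
                (fun h₂ => if PKP T q (s 0) (List.ofFn g ++ h₂)
                  then M.prefProb σ (s 0) (List.ofFn g ++ h₂) else 0))
              (fun g _ => zero_le) (Finset.mem_univ gstar)
  have h0 : 0 < ρ₀ := pos_iff_ne_zero.mpr hρne
  rw [coBuchiProb_eq]
  refine lt_of_lt_of_le (lt_of_lt_of_le h0 (le_iInf hbound)) ?_
  exact le_iSup (fun k => ⨅ n, M.horizonProb σ (s 0) n (PKP T k (s 0))) q

end Easy2

end POMDP

/-- If there is an observation-based strategy positive winning for
`coBüchi(T)` from `l`, then there is a pure observation-based finite-memory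
strategy, with memory of size at most `(|L|+1) · 2^{|L|}`, that is positive
winning for `coBüchi(T)` from `l`. -/
theorem positive_cobuchi_pure_exponential_memory {L A O : Type} [Fintype L] [Fintype A]
    (M : POMDP L A O) (T : Set L) (l : L)
    (h : ∃ α : POMDP.Strategy L A, M.ObservationBased α ∧ 0 < M.coBuchiProb α l T) :
    ∃ (Mem : Type) (iM : Fintype Mem) (m0 : Mem) (u : Mem → O → A → Mem)
      (next : Mem → O → A),
      @Fintype.card Mem iM ≤ (Fintype.card L + 1) * 2 ^ Fintype.card L ∧
      POMDP.PureStrategy (M.fmStrategy u (fun m o => PMF.pure (next m o)) m0) ∧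
      M.ObservationBased (M.fmStrategy u (fun m o => PMF.pure (next m o)) m0) ∧
      0 < M.coBuchiProb (M.fmStrategy u (fun m o => PMF.pure (next m o)) m0) l T := by
  classical
  obtain ⟨tstar, hreach, hWfix⟩ := M.exists_singleton_Wfix T l h
  have hA : Nonempty A := by
    obtain ⟨α, -, -⟩ := h
    exact ⟨(α l []).support_nonempty.choose⟩
  obtain ⟨da⟩ := hA
  obtain ⟨q0, s0, acts0, h00, h0q, h0step⟩ := M.exists_nat_path da hreach
  obtain ⟨q, hq, s, acts, hs0, hsq, hstep⟩ :=
    M.shorten_path q0 s0 acts0 h00 h0q h0step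
  rw [← hsq] at hWfix
  refine ⟨Fin (Fintype.card L + 1) × Finset L, inferInstance,
    (⟨0, by omega⟩, ({s q} : Finset L)), POMDP.easyU M q hq,
    POMDP.easyNext M T da q acts, ?_, ?_, ?_, ?_⟩
  · rw [Fintype.card_prod, Fintype.card_fin, Fintype.card_finset]
  · exact M.fmStrategy_pure _ _ _
  · exact M.fmStrategy_obs _ _ _
  · have := POMDP.easy_cobuchi_pos M T da q hq s acts hstep hWfix
    rw [hs0] at this
    exact this
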